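/- For every n ≥ 2 and every α > 1/n, there exists a fair-division instance with n agents, 2n−1 goods, identical additive subjective utilities u and an additive market valuation v, such that no allocation is simultaneously α-MMS with respect to u and EF1 with respect to v, and no allocation is simultaneously α-MMS with respect to u and α-MMS with respect to v. Concretely: u assigns value 1 to each of n goods in M_1 and value n to each of n−1 goods in M_2, while v assigns 1 to goods in M_1 and 0 to goods in M_2. -/
import Mathlib


open Finset

/-- `A` is a complete partition of the goods among the `n` agents. -/
def partitionOf {n : ℕ} {M : Type*} (A : Fin n → Finset M) : Prop :=
  ∀ g : M, ∃! i, g ∈ A i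

/-- `A` is `α`-MMS w.r.t. additive valuation `w`: each agent's value is at
least `α` times her maximin share (expressed by quantifying over all
partitions; for `α ≥ 0` this is equivalent to the max-min formulation). -/
def alphaMMS {n : ℕ} {M : Type*} (α : ℝ) (w : M → ℝ) (A : Fin n → Finset M) : Prop :=
  ∀ i, ∀ B : Fin n → Finset M, partitionOf B →
    ∃ k, α * (∑ g ∈ B k, w g) ≤ ∑ g ∈ A i, w g

/-- `A` is EF1 w.r.t. additive valuation `w`. -/
def EF1alloc {n : ℕ} {M : Type*} [DecidableEq M] (w : M → ℝ) (A : Fin n → Finset M) : Prop :=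
  ∀ i j, A j = ∅ ∨ ∃ g ∈ A j, (∑ x ∈ (A j).erase g, w x) ≤ ∑ x ∈ A i, w x

lemma filterPartition {n N : ℕ} (f : Fin N → Fin n) :
    partitionOf (fun k => univ.filter fun g => f g = k) := by
  intro g
  refine ⟨f g, by simp, fun i hi => ?_⟩
  exact ((Finset.mem_filter.mp hi).2).symm

lemma count_lemma {n : ℕ} {M : Type*} [DecidableEq M] [Fintype M]
    {A : Fin n → Finset M} (hA : partitionOf A) (T : Finset M) :
    ∑ i, (T.filter (· ∈ A i)).card = T.card := by
  classical
  simp_rw [Finset.card_filter]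
  rw [Finset.sum_comm]
  rw [Finset.card_eq_sum_ones T]
  refine Finset.sum_congr rfl fun g _ => ?_
  obtain ⟨i0, hi0, hun⟩ := hA g
  have hfil : (univ.filter fun i => g ∈ A i) = {i0} := by
    ext i
    simp only [mem_filter, mem_univ, true_and, mem_singleton]
    exact ⟨fun h => hun i h, fun h => h ▸ hi0⟩
  rw [← Finset.card_filter, hfil, Finset.card_singleton]

/-- For `n ≥ 2` and `α > 1/n`: in the instance with `2n-1` goods where `u` is
`1` on the first `n` goods and `n` on the remaining `n-1`, and `v` is `1` on
the first `n` goods and `0` on the rest, no allocation is simultaneously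
`α`-MMS w.r.t. `u` and EF1 w.r.t. `v`, and no allocation is simultaneously
`α`-MMS w.r.t. `u` and `α`-MMS w.r.t. `v`. -/
theorem stmt_7 (n : ℕ) (hn : 2 ≤ n) (α : ℝ) (hα : 1 / (n : ℝ) < α)
    (u v : Fin (2 * n - 1) → ℝ)
    (hu : ∀ g, u g = if (g : ℕ) < n then 1 else (n : ℝ))
    (hv : ∀ g, v g = if (g : ℕ) < n then 1 else 0) :
    ∀ A : Fin n → Finset (Fin (2 * n - 1)), partitionOf A →
      ¬ (alphaMMS α u A ∧ EF1alloc v A) ∧ ¬ (alphaMMS α u A ∧ alphaMMS α v A) := by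
  intro A hA
  classical
  have hn0 : (0:ℝ) < n := by
    have : (0:ℕ) < n := by omega
    exact_mod_cast this
  have hα0 : 0 < α := lt_trans (div_pos one_pos hn0) hα
  have hαn : 1 < α * n := (div_lt_iff₀ hn0).mp hα
  have hu0 : ∀ g, 0 ≤ u g := fun g => by rw [hu]; split <;> positivity
  have hv0 : ∀ g, 0 ≤ v g := fun g => by rw [hv]; split <;> norm_num
  have hv1 : ∀ g, v g ≤ 1 := fun g => by rw [hv]; split <;> norm_num
  set s : Fin n → ℕ := fun i => ((A i).filter fun g : Fin (2*n-1) => (g : ℕ) < n).card with hs_def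
  set b : Fin n → ℕ := fun i => ((A i).filter fun g : Fin (2*n-1) => ¬ (g : ℕ) < n).card with hb_def
  -- value of any bundle under v
  have hv_val : ∀ T : Finset (Fin (2*n-1)),
      ∑ g ∈ T, v g = ((T.filter fun g : Fin (2*n-1) => (g : ℕ) < n).card : ℝ) := by
    intro T
    have h1 : ∑ g ∈ T.filter (fun g : Fin (2*n-1) => (g : ℕ) < n), v g
        = ∑ _g ∈ T.filter (fun g : Fin (2*n-1) => (g : ℕ) < n), (1:ℝ) :=
      Finset.sum_congr rfl fun g hg => by rw [hv, if_pos (Finset.mem_filter.mp hg).2]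
    have h2 : ∑ g ∈ T.filter (fun g : Fin (2*n-1) => ¬ (g : ℕ) < n), v g
        = ∑ _g ∈ T.filter (fun g : Fin (2*n-1) => ¬ (g : ℕ) < n), (0:ℝ) :=
      Finset.sum_congr rfl fun g hg => by rw [hv, if_neg (Finset.mem_filter.mp hg).2]
    rw [← Finset.sum_filter_add_sum_filter_not T (fun g => (g : ℕ) < n) v, h1, h2,
      Finset.sum_const, Finset.sum_const]
    simp
  -- value of any bundle under u
  have hu_val : ∀ T : Finset (Fin (2*n-1)),
      ∑ g ∈ T, u g = ((T.filter fun g : Fin (2*n-1) => (g : ℕ) < n).card : ℝ)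
        + (n : ℝ) * ((T.filter fun g : Fin (2*n-1) => ¬ (g : ℕ) < n).card : ℝ) := by
    intro T
    have h1 : ∑ g ∈ T.filter (fun g : Fin (2*n-1) => (g : ℕ) < n), u g
        = ∑ _g ∈ T.filter (fun g : Fin (2*n-1) => (g : ℕ) < n), (1:ℝ) :=
      Finset.sum_congr rfl fun g hg => by rw [hu, if_pos (Finset.mem_filter.mp hg).2]
    have h2 : ∑ g ∈ T.filter (fun g : Fin (2*n-1) => ¬ (g : ℕ) < n), u g
        = ∑ _g ∈ T.filter (fun g : Fin (2*n-1) => ¬ (g : ℕ) < n), (n:ℝ) :=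
      Finset.sum_congr rfl fun g hg => by rw [hu, if_neg (Finset.mem_filter.mp hg).2]
    rw [← Finset.sum_filter_add_sum_filter_not T (fun g => (g : ℕ) < n) u, h1, h2,
      Finset.sum_const, Finset.sum_const]
    simp [mul_comm]
  -- cardinality of the small goods
  have hSmall : (univ.filter fun g : Fin (2*n-1) => (g : ℕ) < n).card = n := by
    have himg : (univ.filter fun g : Fin (2*n-1) => (g : ℕ) < n) =
        Finset.image (fun k : Fin n => (⟨k.val, by have := k.isLt; omega⟩ : Fin (2*n-1))) univ := by
      ext g
      simp only [mem_filter, mem_univ, true_and, Finset.mem_image]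
      constructor
      · intro hg; exact ⟨⟨g.val, hg⟩, Fin.ext rfl⟩
      · rintro ⟨k, rfl⟩; exact k.isLt
    rw [himg, Finset.card_image_of_injective _
        (fun a c hac => Fin.ext (by simpa [Fin.ext_iff] using hac)),
      card_univ, Fintype.card_fin]
  have hfilter_small : ∀ i : Fin n,
      (A i).filter (fun g : Fin (2*n-1) => (g : ℕ) < n)
        = (univ.filter fun g : Fin (2*n-1) => (g : ℕ) < n).filter (· ∈ A i) := by
    intro i; ext g; simp only [mem_filter, mem_univ, true_and]; tauto
  have hfilter_big : ∀ i : Fin n,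
      (A i).filter (fun g : Fin (2*n-1) => ¬ (g : ℕ) < n)
        = (univ.filter fun g : Fin (2*n-1) => ¬ (g : ℕ) < n).filter (· ∈ A i) := by
    intro i; ext g; simp only [mem_filter, mem_univ, true_and]; tauto
  have hs_sum : ∑ i, s i = n := by
    calc ∑ i, s i
        = ∑ i, ((univ.filter fun g : Fin (2*n-1) => (g : ℕ) < n).filter (· ∈ A i)).card := by
          refine Finset.sum_congr rfl fun i _ => ?_
          simp only [hs_def]
          exact congrArg Finset.card (hfilter_small i)
      _ = n := by rw [count_lemma hA, hSmall]
  have hcards : (univ.filter fun g : Fin (2*n-1) => (g : ℕ) < n).card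
      + (univ.filter fun g : Fin (2*n-1) => ¬ (g : ℕ) < n).card = 2*n-1 := by
    rw [Finset.card_filter_add_card_filter_not, card_univ, Fintype.card_fin]
  have hb_sum : ∑ i, b i = n - 1 := by
    have : ∑ i, b i = (univ.filter fun g : Fin (2*n-1) => ¬ (g : ℕ) < n).card := by
      calc ∑ i, b i
          = ∑ i, ((univ.filter fun g : Fin (2*n-1) => ¬ (g : ℕ) < n).filter (· ∈ A i)).card := by
            refine Finset.sum_congr rfl fun i _ => ?_
            simp only [hb_def]
            exact congrArg Finset.card (hfilter_big i)
        _ = _ := count_lemma hA _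
    omega
  -- the key consequence of being α-MMS w.r.t. u
  have key : alphaMMS α u A → ∃ i0 j : Fin n, 2 ≤ s i0 ∧ s j = 0 := by
    intro hMMSu
    -- the partition showing μ_u = n
    set fstar : Fin (2*n-1) → Fin n := fun g =>
      if (g : ℕ) < n then ⟨0, by omega⟩
      else ⟨(g : ℕ) - n + 1, by have := g.isLt; omega⟩ with hfstar
    have hBu_low : ∀ k : Fin n, (n : ℝ) ≤ ∑ g ∈ univ.filter (fun g => fstar g = k), u g := by
      intro k
      rcases Nat.eq_zero_or_pos k.val with hk | hk
      · have hsub : (univ.filter fun g : Fin (2*n-1) => (g : ℕ) < n)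
            ⊆ univ.filter fun g => fstar g = k := by
          intro g hg
          simp only [mem_filter, mem_univ, true_and] at hg ⊢
          simp only [hfstar]
          rw [if_pos hg]
          exact Fin.ext hk.symm
        have h1 : (n : ℝ) = ∑ g ∈ univ.filter (fun g : Fin (2*n-1) => (g : ℕ) < n), u g := by
          have h1a : ∑ g ∈ univ.filter (fun g : Fin (2*n-1) => (g : ℕ) < n), u g
              = ∑ _g ∈ univ.filter (fun g : Fin (2*n-1) => (g : ℕ) < n), (1:ℝ) :=
            Finset.sum_congr rfl fun g hg => by rw [hu, if_pos (Finset.mem_filter.mp hg).2]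
          rw [h1a, Finset.sum_const, hSmall]
          simp
        rw [h1]
        exact Finset.sum_le_sum_of_subset_of_nonneg hsub (fun g _ _ => hu0 g)
      · set e : Fin (2*n-1) := ⟨n + k.val - 1, by have := k.isLt; omega⟩ with he
        have henot : ¬ ((e : ℕ) < n) := by show ¬ (n + k.val - 1 < n); omega
        have hmem : e ∈ univ.filter fun g => fstar g = k := by
          simp only [mem_filter, mem_univ, true_and, hfstar]
          rw [if_neg henot]
          apply Fin.ext
          show n + k.val - 1 - n + 1 = k.val
          omega
        have hue : u e = n := by rw [hu, if_neg henot]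
        calc (n : ℝ) = u e := hue.symm
          _ ≤ _ := Finset.single_le_sum (fun g _ => hu0 g) hmem
    have hlt : ∀ i, 1 < (s i : ℝ) + (n : ℝ) * (b i : ℝ) := by
      intro i
      obtain ⟨k, hk⟩ := hMMSu i (fun k => univ.filter fun g => fstar g = k) (filterPartition fstar)
      have h1 : α * n ≤ α * ∑ g ∈ univ.filter (fun g => fstar g = k), u g :=
        mul_le_mul_of_nonneg_left (hBu_low k) hα0.le
      have h2 : (1:ℝ) < ∑ g ∈ A i, u g := lt_of_lt_of_le hαn (le_trans h1 hk)
      rw [hu_val (A i)] at h2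
      simpa [hs_def, hb_def] using h2
    -- find an agent with no big good
    have hex_i0 : ∃ i0, b i0 = 0 := by
      by_contra hco
      push_neg at hco
      have hge : (n : ℕ) ≤ ∑ i, b i := by
        calc (n : ℕ) = ∑ _i : Fin n, 1 := by simp
          _ ≤ ∑ i, b i := Finset.sum_le_sum fun i _ => Nat.one_le_iff_ne_zero.mpr (hco i)
      omega
    obtain ⟨i0, hi0⟩ := hex_i0
    have hsi0 : 2 ≤ s i0 := by
      have h := hlt i0
      rw [hi0] at h
      simp only [Nat.cast_zero, mul_zero, add_zero] at h
      exact_mod_cast h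
    have hex_j : ∃ j, s j = 0 := by
      by_contra hco
      push_neg at hco
      have h1 : ∀ i ∈ univ.erase i0, 1 ≤ s i := fun i _ =>
        Nat.one_le_iff_ne_zero.mpr (hco i)
      have h2 : (univ.erase i0).card ≤ ∑ i ∈ univ.erase i0, s i := by
        calc (univ.erase i0).card = ∑ _i ∈ univ.erase i0, 1 := by simp
          _ ≤ _ := Finset.sum_le_sum h1
      have h3 : (univ.erase i0).card = n - 1 := by
        rw [Finset.card_erase_of_mem (Finset.mem_univ i0), card_univ, Fintype.card_fin]
      have h4 : s i0 + ∑ i ∈ univ.erase i0, s i = n := by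
        rw [Finset.add_sum_erase _ s (Finset.mem_univ i0)]
        exact hs_sum
      omega
    obtain ⟨j, hj⟩ := hex_j
    exact ⟨i0, j, hsi0, hj⟩
  constructor
  · rintro ⟨hM, hEF⟩
    obtain ⟨i0, j, hi0, hj⟩ := key hM
    have hvj : ∑ x ∈ A j, v x = 0 := by
      rw [hv_val (A j)]
      have : ((A j).filter fun g : Fin (2*n-1) => (g : ℕ) < n).card = 0 := hj
      rw [this]; simp
    have hvi0 : ∑ x ∈ A i0, v x = (s i0 : ℝ) := by
      rw [hv_val (A i0)]
    rcases hEF j i0 with hempty | ⟨g, hg, hle⟩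
    · have : s i0 = 0 := by simp [hs_def, hempty]
      omega
    · have h1 : ∑ x ∈ (A i0).erase g, v x = (∑ x ∈ A i0, v x) - v g :=
        Finset.sum_erase_eq_sub hg
      have h2 : (2:ℝ) ≤ (s i0 : ℝ) := by exact_mod_cast hi0
      rw [h1, hvi0, hvj] at hle
      have := hv1 g
      linarith
  · rintro ⟨hM, hMv⟩
    obtain ⟨i0, j, hi0, hj⟩ := key hM
    have hvj : ∑ x ∈ A j, v x = 0 := by
      rw [hv_val (A j)]
      have : ((A j).filter fun g : Fin (2*n-1) => (g : ℕ) < n).card = 0 := hj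
      rw [this]; simp
    set fv : Fin (2*n-1) → Fin n := fun g =>
      (⟨(g : ℕ) % n, Nat.mod_lt _ (by omega)⟩ : Fin n) with hfv
    obtain ⟨k, hk⟩ := hMv j (fun k => univ.filter fun g => fv g = k) (filterPartition fv)
    have hmemk : (⟨k.val, by have := k.isLt; omega⟩ : Fin (2*n-1))
        ∈ univ.filter fun g => fv g = k := by
      simp only [mem_filter, mem_univ, true_and, hfv]
      apply Fin.ext
      show k.val % n = k.val
      exact Nat.mod_eq_of_lt k.isLt
    have hvek : v (⟨k.val, by have := k.isLt; omega⟩ : Fin (2*n-1)) = 1 := by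
      rw [hv, if_pos]
      exact k.isLt
    have hval : (1:ℝ) ≤ ∑ g ∈ univ.filter (fun g => fv g = k), v g := by
      calc (1:ℝ) = v (⟨k.val, by have := k.isLt; omega⟩ : Fin (2*n-1)) := hvek.symm
        _ ≤ _ := Finset.single_le_sum (fun g _ => hv0 g) hmemk
    rw [hvj] at hk
    nlinarith
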